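/- Let a,b > 0, e < 1 and c,d be real, and let s > 1 and t > 1. Then I₂(s,t) := ∫_0^1 (∫_0^{1-v} u^{a-1} (s-u)^{c-1} (1-u-v)^{-e} du) v^{b-1} (t-v)^{d-1} dv = B(a,b,1-e) s^{c-1} t^{d-1} · F₃(a, b; 1-c, 1-d; a+b+1-e; 1/s, 1/t). -/

import Mathlib

open Real intervalIntegral

/-- The Pochhammer symbol `(a)_k = a(a+1)⋯(a+k-1) = Γ(a+k)/Γ(a)`. -/
noncomputable def poch (a : ℝ) (k : ℕ) : ℝ := ∏ i ∈ Finset.range k, (a + (i : ℝ))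

/-- The Beta function `B(x,y) = Γ(x)Γ(y)/Γ(x+y)`. -/
noncomputable def Beta2 (x y : ℝ) : ℝ := Real.Gamma x * Real.Gamma y / Real.Gamma (x + y)

/-- Extended Beta function `B(x,y,z) = Γ(x)Γ(y)Γ(z)/Γ(x+y+z)`. -/
noncomputable def Beta3 (x y z : ℝ) : ℝ :=
  Real.Gamma x * Real.Gamma y * Real.Gamma z / Real.Gamma (x + y + z)

/-- The third Appell hypergeometric function
`F₃(a₁,a₂; b₁,b₂; c; x,y) = Σ_{i,j} (a₁)_i(a₂)_j(b₁)_i(b₂)_j/((c)_{i+j} i! j!) xⁱ yʲ`. -/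
noncomputable def F3 (a₁ a₂ b₁ b₂ c x y : ℝ) : ℝ :=
  ∑' (i : ℕ) (j : ℕ),
    poch a₁ i * poch a₂ j * poch b₁ i * poch b₂ j /
      (poch c (i + j) * (Nat.factorial i : ℝ) * (Nat.factorial j : ℝ)) * x ^ i * y ^ j

namespace Stmt10Aux

open MeasureTheory Set Filter Topology

lemma poch_zero (r : ℝ) : poch r 0 = 1 := Finset.prod_range_zero _

lemma poch_succ (r : ℝ) (n : ℕ) : poch r (n+1) = poch r n * (r + n) :=
  Finset.prod_range_succ _ _

lemma poch_pos {x : ℝ} (hx : 0 < x) (n : ℕ) : 0 < poch x n :=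
  Finset.prod_pos fun i _ => by positivity

lemma Gamma_add_nat {x : ℝ} (hx : 0 < x) (n : ℕ) :
    Real.Gamma (x + n) = poch x n * Real.Gamma x := by
  induction n with
  | zero => simp [poch_zero]
  | succ n ih =>
    have h : x + ((n:ℕ)+1 : ℕ) = (x + n) + 1 := by push_cast; ring
    rw [h, Real.Gamma_add_one (by positivity : (0:ℝ) < x + n).ne', ih, poch_succ]; ring

lemma tendsto_ratio (r : ℝ) : Tendsto (fun n : ℕ => |r + n| / ((n:ℝ) + 1)) atTop (𝓝 1) := by
  have h0 : Tendsto (fun n : ℕ => 1/((n:ℝ)+1)) atTop (𝓝 0) :=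
    tendsto_one_div_add_atTop_nhds_zero_nat
  have h1 : Tendsto (fun n : ℕ => 1 + (r-1)*(1/((n:ℝ)+1))) atTop (𝓝 (1 + (r-1)*0)) :=
    tendsto_const_nhds.add (h0.const_mul _)
  rw [mul_zero, add_zero] at h1
  apply h1.congr'
  filter_upwards [eventually_ge_atTop ⌈|r|⌉₊] with n hn
  have hr : |r| ≤ (n:ℝ) := le_trans (Nat.le_ceil _) (Nat.cast_le.2 hn)
  have h2 : (0:ℝ) ≤ r + n := by
    have := neg_abs_le r; linarith
  rw [abs_of_nonneg h2]
  have h3 : ((n:ℝ)+1) ≠ 0 := by positivity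
  field_simp
  ring

lemma tendsto_ratio2 : Tendsto (fun n : ℕ => ((n:ℝ) + 2) / ((n:ℝ) + 1)) atTop (𝓝 1) := by
  have h0 : Tendsto (fun n : ℕ => 1/((n:ℝ)+1)) atTop (𝓝 0) :=
    tendsto_one_div_add_atTop_nhds_zero_nat
  have h1 : Tendsto (fun n : ℕ => 1 + (1/((n:ℝ)+1))) atTop (𝓝 (1 + 0)) :=
    tendsto_const_nhds.add h0
  rw [add_zero] at h1
  apply h1.congr fun n => ?_
  have h3 : ((n:ℝ)+1) ≠ 0 := by positivity
  field_simp
  ring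

lemma summable_poch_aux (r x : ℝ) (hx : 0 ≤ x) (h1 : x < 1) :
    Summable (fun n : ℕ => |poch r n| / (n.factorial : ℝ) * ((n:ℝ) + 1) * x ^ n) := by
  rcases eq_or_lt_of_le hx with hx0 | hx0
  · apply summable_of_ne_finset_zero (s := {0})
    intro n hn
    have : n ≠ 0 := by simpa using hn
    simp [← hx0, zero_pow this]
  set f : ℕ → ℝ := fun n => |poch r n| / (n.factorial : ℝ) * ((n:ℝ) + 1) * x ^ n with hf
  have hfnn : ∀ n, 0 ≤ f n := fun n => by positivity
  set q : ℕ → ℝ := fun n => (|r + n| / ((n:ℝ)+1)) * (((n:ℝ)+2)/((n:ℝ)+1)) * x with hq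
  have hstep : ∀ n, f (n+1) = q n * f n := by
    intro n
    simp only [hf, hq, poch_succ, abs_mul, Nat.factorial_succ]
    push_cast
    have h3 : ((n:ℝ)+1) ≠ 0 := by positivity
    have h4 : ((n.factorial:ℝ)) ≠ 0 := Nat.cast_ne_zero.2 n.factorial_ne_zero
    field_simp
    ring
  have hqlim : Tendsto q atTop (𝓝 x) := by
    have := ((tendsto_ratio r).mul tendsto_ratio2).mul_const x
    simpa using this
  set l : ℝ := (1+x)/2 with hl
  have hl1 : l < 1 := by rw [hl]; linarith
  have hxl : x < l := by rw [hl]; linarith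
  have hev : ∀ᶠ n in atTop, q n < l := hqlim.eventually_lt_const hxl
  refine summable_of_ratio_norm_eventually_le hl1 ?_
  filter_upwards [hev] with n hn
  have hq0 : 0 ≤ q n := by
    have : (0:ℝ) ≤ |r + n| / ((n:ℝ)+1) := by positivity
    have : (0:ℝ) ≤ ((n:ℝ)+2)/((n:ℝ)+1) := by positivity
    positivity
  rw [Real.norm_eq_abs, Real.norm_eq_abs, abs_of_nonneg (hfnn _), abs_of_nonneg (hfnn _),
    hstep n]
  exact mul_le_mul_of_nonneg_right hn.le (hfnn n)

lemma summable_poch (r x : ℝ) (hx : 0 ≤ x) (h1 : x < 1) :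
    Summable (fun n : ℕ => |poch r n| / (n.factorial : ℝ) * x ^ n) := by
  refine (summable_poch_aux r x hx h1).of_nonneg_of_le (fun n => by positivity) (fun n => ?_)
  have h0 : (0:ℝ) ≤ |poch r n| / (n.factorial : ℝ) * x ^ n := by positivity
  nlinarith [h0]

lemma summable_binom (r y : ℝ) (hy : |y| < 1) :
    Summable (fun n : ℕ => poch r n / (n.factorial : ℝ) * y ^ n) := by
  apply Summable.of_abs
  apply (summable_poch r |y| (abs_nonneg y) hy).congr
  intro n
  rw [abs_mul, abs_div, abs_pow, Nat.abs_cast]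

noncomputable def bg (r : ℝ) (n : ℕ) (y : ℝ) : ℝ := poch r n / (n.factorial : ℝ) * y ^ n
noncomputable def bg' (r : ℝ) (n : ℕ) (y : ℝ) : ℝ :=
  poch r n / (n.factorial : ℝ) * ((n:ℝ) * y ^ (n-1))

set_option maxHeartbeats 1000000 in
lemma hasSum_binomial (r : ℝ) {x : ℝ} (hx : |x| < 1) :
    HasSum (fun n : ℕ => poch r n / (n.factorial : ℝ) * x ^ n) ((1 - x) ^ (-r)) := by
  set ρ : ℝ := (|x| + 1)/2 with hρdef
  have hρ0 : 0 < ρ := by positivity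
  have hxρ : |x| < ρ := by rw [hρdef]; linarith
  have hρ1 : ρ < 1 := by rw [hρdef]; linarith
  set t : Set ℝ := Ioo (-ρ) ρ with ht
  have hmem : ∀ y ∈ t, |y| < ρ := fun y hy => abs_lt.2 ⟨by linarith [hy.1], hy.2⟩
  have hxt : x ∈ t := by have := abs_lt.1 hxρ; exact ⟨this.1, this.2⟩
  have h0t : (0:ℝ) ∈ t := ⟨by linarith, hρ0⟩
  have habs : ∀ y ∈ t, |y| < 1 := fun y hy => (hmem y hy).trans hρ1
  set u : ℕ → ℝ := fun n => |poch r n| / (n.factorial : ℝ) * ((n:ℝ)+1) * ρ^n / ρ with hu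
  have husum : Summable u := (summable_poch_aux r ρ hρ0.le hρ1).div_const ρ
  have hderiv : ∀ (n : ℕ) (y : ℝ), y ∈ t → HasDerivAt (bg r n) (bg' r n y) y := by
    intro n y _
    show HasDerivAt (fun y => poch r n / (n.factorial:ℝ) * y ^ n)
      (poch r n / (n.factorial:ℝ) * ((n:ℝ) * y ^ (n-1))) y
    exact (hasDerivAt_pow n y).const_mul (poch r n / (n.factorial:ℝ))
  have hbound : ∀ (n : ℕ) (y : ℝ), y ∈ t → ‖bg' r n y‖ ≤ u n := by
    intro n y hy
    have hyρ := hmem y hy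
    rw [Real.norm_eq_abs, bg', abs_mul, abs_mul, abs_div, Nat.abs_cast, Nat.abs_cast, abs_pow]
    cases n with
    | zero => simp only [Nat.cast_zero, zero_mul, mul_zero]; positivity
    | succ m =>
      simp only [Nat.add_sub_cancel]
      have h2 : |y| ^ m ≤ ρ ^ m := pow_le_pow_left₀ (abs_nonneg y) hyρ.le m
      have h3 : u (m+1) = |poch r (m+1)| / (((m+1).factorial:ℕ) : ℝ) * (((m:ℝ)+2) * ρ^m) := by
        rw [hu]
        push_cast
        field_simp [pow_succ]
        ring
      rw [h3]
      push_cast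
      have h4 : ((m:ℝ)+1) * |y|^m ≤ ((m:ℝ)+2) * ρ^m :=
        mul_le_mul (by linarith) h2 (by positivity) (by positivity)
      exact mul_le_mul_of_nonneg_left h4 (by positivity)
  have hsum0 : Summable (fun n => bg r n 0) := by
    have := summable_binom r 0 (by norm_num)
    simpa [bg] using this
  have hS : ∀ y ∈ t, HasDerivAt (fun z => ∑' n, bg r n z) (∑' n, bg' r n y) y :=
    fun y hy => hasDerivAt_tsum_of_isPreconnected husum isOpen_Ioo
      (convex_Ioo _ _).isPreconnected hderiv hbound h0t hsum0 hy
  have hg'sum : ∀ y ∈ t, Summable (fun n => bg' r n y) := fun y hy =>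
    Summable.of_norm_bounded husum (fun n => hbound n y hy)
  have hode : ∀ y ∈ t, (1 - y) * (∑' n, bg' r n y) = r * ∑' n, bg r n y := by
    intro y hy
    have hD : HasSum (fun n => bg' r n y) (∑' n, bg' r n y) := (hg'sum y hy).hasSum
    have hA : HasSum (fun n => bg r n y) (∑' n, bg r n y) := by
      have := summable_binom r y (habs y hy)
      exact ((by simpa [bg] using this : Summable (fun n => bg r n y))).hasSum
    have hshift : HasSum (fun n => bg' r (n+1) y) (∑' n, bg' r n y) := by
      have h0 : bg' r 0 y = 0 := by simp [bg']
      refine (hasSum_nat_add_iff (f := fun n => bg' r n y) 1).2 ?_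
      simpa [h0] using hD
    have hkey : ∀ n : ℕ, bg' r (n+1) y = r * bg r n y + y * bg' r n y := by
      intro n
      cases n with
      | zero => simp [bg, bg', poch_succ, poch_zero, Nat.factorial]
      | succ m =>
        simp only [bg, bg', poch_succ, Nat.factorial_succ, Nat.add_sub_cancel]
        push_cast
        have h4 : ((m:ℝ)+1) ≠ 0 := by positivity
        have h5 : ((m.factorial:ℝ)) ≠ 0 := Nat.cast_ne_zero.2 m.factorial_ne_zero
        field_simp
        ring
    have hsum2 : HasSum (fun n => r * bg r n y + y * bg' r n y)
        (r * (∑' n, bg r n y) + y * (∑' n, bg' r n y)) := (hA.mul_left r).add (hD.mul_left y)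
    have hsum2' : HasSum (fun n => bg' r (n+1) y)
        (r * (∑' n, bg r n y) + y * (∑' n, bg' r n y)) := by
      simpa only [← hkey] using hsum2
    have h6 := hsum2'.unique hshift
    linarith [h6]
  have hh : ∀ y ∈ t, HasDerivAt (fun z => (∑' n, bg r n z) * (1 - z) ^ r) 0 y := by
    intro y hy
    have hy1 : 0 < 1 - y := by linarith [lt_of_abs_lt (habs y hy)]
    have hinner : HasDerivAt (fun z : ℝ => 1 - z) (-1) y := (hasDerivAt_id y).const_sub 1
    have hd1 : HasDerivAt (fun z : ℝ => (1 - z) ^ r) (r * (1 - y) ^ (r - 1) * (-1)) y := by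
      have h := Real.hasDerivAt_rpow_const (x := 1 - y) (p := r) (Or.inl hy1.ne')
      exact h.comp y hinner
    have hmul := (hS y hy).mul hd1
    have hmul' : HasDerivAt (fun z => (∑' n, bg r n z) * (1 - z) ^ r) _ y := hmul
    refine hmul'.congr_deriv ?_
    have hode' := hode y hy
    have hsplit : (1 - y) ^ r = (1 - y) * (1 - y) ^ (r - 1) := by
      have h7 := Real.rpow_add hy1 1 (r-1)
      rw [Real.rpow_one] at h7
      have h8 : (1:ℝ) + (r-1) = r := by ring
      rw [h8] at h7
      exact h7
    rw [hsplit]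
    linear_combination ((1-y)^(r-1)) * hode'
  have hconst : (∑' n, bg r n x) * (1-x)^r = (∑' n, bg r n 0) * (1-(0:ℝ))^r := by
    rcases le_total 0 x with h | h
    · have hsub : Icc (0:ℝ) x ⊆ t := fun z hz =>
        ⟨by linarith [hz.1], lt_of_le_of_lt hz.2 (lt_of_abs_lt hxρ)⟩
      have := constant_of_has_deriv_right_zero
        (f := fun z => (∑' n, bg r n z) * (1 - z) ^ r) (a := 0) (b := x)
        (fun z hz => ((hh z (hsub hz)).continuousAt).continuousWithinAt)
        (fun z hz => ((hh z (hsub ⟨hz.1, hz.2.le⟩)).hasDerivWithinAt))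
        x (right_mem_Icc.2 h)
      simpa using this
    · have hsub : Icc x (0:ℝ) ⊆ t := fun z hz =>
        ⟨lt_of_lt_of_le (neg_lt_of_abs_lt hxρ) hz.1, by linarith [hz.2, hρ0]⟩
      have := constant_of_has_deriv_right_zero
        (f := fun z => (∑' n, bg r n z) * (1 - z) ^ r) (a := x) (b := 0)
        (fun z hz => ((hh z (hsub hz)).continuousAt).continuousWithinAt)
        (fun z hz => ((hh z (hsub ⟨hz.1, hz.2.le⟩)).hasDerivWithinAt))
        0 (right_mem_Icc.2 h)
      simpa using this.symm
  have hS0 : (∑' n, bg r n 0) = 1 := by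
    rw [tsum_eq_single 0 ?_]
    · simp [bg, poch_zero]
    · intro n hn; simp [bg, zero_pow hn]
  have h1x : 0 < 1 - x := by linarith [lt_of_abs_lt hx]
  have hne : (1-x)^r ≠ 0 := (Real.rpow_pos_of_pos h1x r).ne'
  have hSx : (∑' n, bg r n x) = (1-x)^(-r) := by
    have h2 : (∑' n, bg r n x) * (1-x)^r = 1 := by
      rw [hconst, hS0]; simp
    rw [Real.rpow_neg h1x.le]
    field_simp
    linarith [h2]
  have hsum : Summable (fun n : ℕ => poch r n / (n.factorial:ℝ) * x^n) := summable_binom r x hx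
  refine hsum.hasSum_iff.2 ?_
  simpa [bg] using hSx

lemma betaIntegrableW {p q w : ℝ} (hp : 0 < p) (hq : 0 < q) (hw : 0 < w) :
    IntervalIntegrable (fun u : ℝ => u ^ (p-1) * (w-u) ^ (q-1)) volume 0 w := by
  have h1 : IntervalIntegrable (fun u : ℝ => u ^ (p-1) * (w-u)^(q-1)) volume 0 (w/2) := by
    apply IntervalIntegrable.mul_continuousOn (intervalIntegrable_rpow' (by linarith))
    apply ContinuousOn.rpow_const (continuous_const.sub continuous_id).continuousOn
    intro u hu
    left
    rw [uIcc_of_le (by linarith : (0:ℝ) ≤ w/2)] at hu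
    intro hc
    have h9 := sub_eq_zero.1 hc
    simp only [id] at h9
    have := hu.2
    linarith
  have h2 : IntervalIntegrable (fun u : ℝ => u ^ (p-1) * (w-u)^(q-1)) volume (w/2) w := by
    have h3 : IntervalIntegrable (fun x : ℝ => x ^ (q-1)) volume 0 (w/2) :=
      intervalIntegrable_rpow' (by linarith)
    have h4 := h3.comp_sub_left w
    rw [sub_zero] at h4
    have h5 : w - w/2 = w/2 := by ring
    rw [h5] at h4
    have h6 : IntervalIntegrable (fun u : ℝ => (w-u) ^ (q-1)) volume (w/2) w := h4.symm
    apply h6.continuousOn_mul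
    apply ContinuousOn.rpow_const continuous_id.continuousOn
    intro u hu
    left
    rw [uIcc_of_le (by linarith : w/2 ≤ w)] at hu
    exact (show (0:ℝ) < u by have := hu.1; linarith).ne'
  exact h1.trans h2

lemma betaIntegral_eval {p q : ℝ} (hp : 0 < p) (hq : 0 < q) :
    ∫ u in (0:ℝ)..1, u ^ (p-1) * (1-u) ^ (q-1) = Beta2 p q := by
  have hc := Complex.Gamma_mul_Gamma_eq_betaIntegral (s := (p:ℂ)) (t := (q:ℂ))
    (by simpa using hp) (by simpa using hq)
  have heq : Complex.betaIntegral p q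
      = ((∫ u in (0:ℝ)..1, u ^ (p-1) * (1-u) ^ (q-1) : ℝ) : ℂ) := by
    rw [Complex.betaIntegral, ← intervalIntegral.integral_ofReal]
    apply intervalIntegral.integral_congr
    intro u hu
    rw [uIcc_of_le zero_le_one] at hu
    dsimp only
    rw [Complex.ofReal_mul, Complex.ofReal_cpow hu.1,
      Complex.ofReal_cpow (by linarith [hu.2] : (0:ℝ) ≤ 1 - u)]
    push_cast
    ring
  rw [heq] at hc
  rw [show ((p:ℂ) + q) = ((p+q : ℝ) : ℂ) by push_cast; ring] at hc
  rw [Complex.Gamma_ofReal, Complex.Gamma_ofReal, Complex.Gamma_ofReal] at hc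
  have hreal : Real.Gamma p * Real.Gamma q
      = Real.Gamma (p+q) * ∫ u in (0:ℝ)..1, u ^ (p-1) * (1-u) ^ (q-1) := by
    exact_mod_cast hc
  have hΓ : Real.Gamma (p+q) ≠ 0 := (Real.Gamma_pos_of_pos (by linarith)).ne'
  rw [Beta2, eq_div_iff hΓ]
  linear_combination -hreal

lemma Beta2_pos {p q : ℝ} (hp : 0 < p) (hq : 0 < q) : 0 < Beta2 p q :=
  div_pos (mul_pos (Real.Gamma_pos_of_pos hp) (Real.Gamma_pos_of_pos hq))
    (Real.Gamma_pos_of_pos (by linarith))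

lemma Beta2_le {p p' q : ℝ} (hp : 0 < p) (hpp' : p ≤ p') (hq : 0 < q) :
    Beta2 p' q ≤ Beta2 p q := by
  rw [← betaIntegral_eval hp hq, ← betaIntegral_eval (lt_of_lt_of_le hp hpp') hq]
  rw [intervalIntegral.integral_of_le zero_le_one, intervalIntegral.integral_of_le zero_le_one]
  have hi1 : IntegrableOn (fun u : ℝ => u ^ (p'-1) * (1-u) ^ (q-1)) (Ioc 0 1) volume :=
    (intervalIntegrable_iff_integrableOn_Ioc_of_le zero_le_one).1
      (betaIntegrableW (lt_of_lt_of_le hp hpp') hq one_pos)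
  have hi2 : IntegrableOn (fun u : ℝ => u ^ (p-1) * (1-u) ^ (q-1)) (Ioc 0 1) volume :=
    (intervalIntegrable_iff_integrableOn_Ioc_of_le zero_le_one).1 (betaIntegrableW hp hq one_pos)
  apply setIntegral_mono_on hi1 hi2 measurableSet_Ioc
  intro u hu
  have h1 : u ^ (p'-1) ≤ u ^ (p-1) :=
    Real.rpow_le_rpow_of_exponent_ge hu.1 hu.2 (by linarith)
  exact mul_le_mul_of_nonneg_right h1 (Real.rpow_nonneg (by linarith [hu.2]) _)

lemma betaIntegralW_eval {p q w : ℝ} (hp : 0 < p) (hq : 0 < q) (hw : 0 < w) :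
    ∫ u in (0:ℝ)..w, u ^ (p-1) * (w-u) ^ (q-1) = w ^ (p+q-1) * Beta2 p q := by
  have h := intervalIntegral.integral_comp_mul_left
    (f := fun u : ℝ => u ^ (p-1) * (w-u) ^ (q-1)) (a := 0) (b := 1) (c := w) hw.ne'
  rw [mul_zero, mul_one] at h
  beta_reduce at h
  have h2 : (∫ x in (0:ℝ)..1, ((w*x) ^ (p-1) * (w-w*x) ^ (q-1)))
      = ∫ x in (0:ℝ)..1, w^(p-1) * w^(q-1) * (x^(p-1) * (1-x)^(q-1)) := by
    apply intervalIntegral.integral_congr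
    intro x hx
    rw [uIcc_of_le zero_le_one] at hx
    dsimp only
    rw [show w - w*x = w * (1-x) by ring, Real.mul_rpow hw.le hx.1,
      Real.mul_rpow hw.le (by linarith [hx.2] : (0:ℝ) ≤ 1 - x)]
    ring
  rw [h2] at h
  rw [intervalIntegral.integral_const_mul, betaIntegral_eval hp hq] at h
  have h3 : (∫ u in (0:ℝ)..w, u ^ (p-1) * (w-u) ^ (q-1))
      = w * (w ^ (p-1) * w ^ (q-1) * Beta2 p q) := by
    rw [smul_eq_mul] at h
    have h4 := congrArg (fun z => w * z) h
    simp only [← mul_assoc, mul_inv_cancel₀ hw.ne', one_mul] at h4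
    rw [← h4]
    ring
  rw [h3]
  rw [show p + q - 1 = 1 + ((p-1) + (q-1)) by ring, Real.rpow_add hw, Real.rpow_add hw,
    Real.rpow_one]
  ring

lemma key {α γ ε s w : ℝ} (hα : 0 < α) (hε : ε < 1) (hs : 1 < s) (hw : 0 < w) (hw1 : w ≤ 1) :
    HasSum (fun i : ℕ => s^(γ-1) * poch (1-γ) i / ((i.factorial : ℝ) * s^i)
        * (Beta2 (α+i) (1-ε) * w^(α+i-ε)))
      (∫ u in (0:ℝ)..w, u^(α-1) * (s-u)^(γ-1) * (w-u)^(-ε)) := by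
  have hs0 : (0:ℝ) < s := by linarith
  have hsγ : 0 < s^(γ-1) := Real.rpow_pos_of_pos hs0 _
  set D : ℕ → ℝ := fun i => s^(γ-1) * poch (1-γ) i / ((i.factorial : ℝ) * s^i) with hD
  have hDabs : Summable (fun i => |D i|) := by
    have h0 : (0:ℝ) ≤ 1/s := by positivity
    have h1 : (1:ℝ)/s < 1 := by rw [div_lt_one hs0]; exact hs
    refine ((summable_poch (1-γ) (1/s) h0 h1).mul_left (s^(γ-1))).congr fun i => ?_
    have hfact : (0:ℝ) < (i.factorial : ℝ) := Nat.cast_pos.2 i.factorial_pos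
    have hspow : (0:ℝ) < s^i := by positivity
    rw [hD]
    rw [abs_div, abs_mul, abs_mul, abs_of_pos hsγ, abs_of_pos hfact, abs_of_pos hspow]
    rw [div_pow, one_pow]
    field_simp
  set μ : Measure ℝ := volume.restrict (Ioo 0 w) with hμ
  set F : ℕ → ℝ → ℝ := fun i u => D i * (u^(α+(i:ℝ)-1) * (w-u)^(-ε)) with hF
  set bound : ℕ → ℝ → ℝ := fun i u => |D i| * (u^(α-1) * (w-u)^(-ε)) with hbd
  have hmeas : ∀ i : ℕ, AEStronglyMeasurable (F i) μ := by
    intro i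
    rw [hμ]
    apply ContinuousOn.aestronglyMeasurable ?_ measurableSet_Ioo
    apply ContinuousOn.mul continuousOn_const
    apply ContinuousOn.mul
    · exact ContinuousOn.rpow_const continuousOn_id (fun u hu => Or.inl (ne_of_gt hu.1))
    · exact ContinuousOn.rpow_const (continuous_const.sub continuous_id).continuousOn
        (fun u hu => Or.inl (sub_ne_zero.2 (ne_of_gt hu.2)))
  have hInt : IntervalIntegrable (fun u : ℝ => u^(α-1) * (w-u)^(-ε)) volume 0 w := by
    have := betaIntegrableW hα (by linarith : (0:ℝ) < 1-ε) hw
    simpa [show (1-ε)-1 = -ε by ring] using this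
  have hIntOn : IntegrableOn (fun u : ℝ => u^(α-1) * (w-u)^(-ε)) (Ioo 0 w) volume :=
    ((intervalIntegrable_iff_integrableOn_Ioc_of_le hw.le).1 hInt).mono_set Ioo_subset_Ioc_self
  have h_bound : ∀ i : ℕ, ∀ᵐ u ∂μ, ‖F i u‖ ≤ bound i u := by
    intro i
    rw [hμ, ae_restrict_iff' measurableSet_Ioo]
    filter_upwards with u hu
    have hu0 : 0 < u := hu.1
    have huw : u ≤ w := hu.2.le
    have hwu : 0 ≤ w - u := by linarith
    have hnn : 0 ≤ u^(α+(i:ℝ)-1) * (w-u)^(-ε) :=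
      mul_nonneg (Real.rpow_nonneg hu0.le _) (Real.rpow_nonneg hwu _)
    rw [hF, Real.norm_eq_abs, abs_mul, abs_of_nonneg hnn]
    refine mul_le_mul_of_nonneg_left ?_ (abs_nonneg _)
    refine mul_le_mul_of_nonneg_right ?_ (Real.rpow_nonneg hwu _)
    rw [show α+(i:ℝ)-1 = (α-1) + (i:ℕ) by push_cast; ring, Real.rpow_add hu0,
      Real.rpow_natCast]
    have : u^(i:ℕ) ≤ 1 := pow_le_one₀ hu0.le (huw.trans hw1)
    nlinarith [Real.rpow_pos_of_pos hu0 (α-1)]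
  have h_bd_sum : ∀ᵐ u ∂μ, Summable fun i => bound i u := by
    filter_upwards with u
    exact (hDabs.mul_right _)
  have h_bd_int : Integrable (fun u => ∑' i, bound i u) μ := by
    have hpt : ∀ u, (∑' i, bound i u) = (∑' i, |D i|) * (u^(α-1) * (w-u)^(-ε)) := by
      intro u; rw [hbd, tsum_mul_right]
    rw [funext hpt]
    exact (hIntOn.const_mul _)
  have h_lim : ∀ᵐ u ∂μ, HasSum (fun i => F i u) (u^(α-1) * (s-u)^(γ-1) * (w-u)^(-ε)) := by
    rw [hμ, ae_restrict_iff' measurableSet_Ioo]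
    filter_upwards with u hu
    have hu0 : 0 < u := hu.1
    have hus : u/s < 1 := by rw [div_lt_one hs0]; linarith [hu.2.le]
    have hus0 : 0 ≤ u/s := by positivity
    have hbin := hasSum_binomial (1-γ) (x := u/s) (by rw [abs_of_nonneg hus0]; exact hus)
    have h2 := hbin.mul_left (s^(γ-1) * (u^(α-1) * (w-u)^(-ε)))
    have hterm : ∀ i : ℕ, s^(γ-1) * (u^(α-1) * (w-u)^(-ε))
        * (poch (1-γ) i / (i.factorial:ℝ) * (u/s)^i)
        = D i * (u^(α+(i:ℝ)-1) * (w-u)^(-ε)) := by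
      intro i
      simp only [hD, div_pow]
      rw [show α+(i:ℝ)-1 = (α-1) + (i:ℕ) by push_cast; ring, Real.rpow_add hu0,
        Real.rpow_natCast]
      have hfact : ((i.factorial:ℝ)) ≠ 0 := Nat.cast_ne_zero.2 i.factorial_ne_zero
      have hspow : (s:ℝ)^i ≠ 0 := by positivity
      field_simp
    have htgt : s^(γ-1) * (u^(α-1) * (w-u)^(-ε)) * ((1 - u/s) ^ (-(1-γ)))
        = u^(α-1) * (s-u)^(γ-1) * (w-u)^(-ε) := by
      rw [show -(1-γ) = γ-1 by ring]
      have h3 : (s-u) = s * (1 - u/s) := by field_simp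
      rw [h3, Real.mul_rpow hs0.le (by linarith : (0:ℝ) ≤ 1 - u/s)]
      ring
    rw [funext hterm, htgt] at h2
    exact h2
  have H := MeasureTheory.hasSum_integral_of_dominated_convergence bound hmeas h_bound
    h_bd_sum h_bd_int h_lim
  have hIval : ∀ i : ℕ, (∫ u, F i u ∂μ) = s^(γ-1) * poch (1-γ) i / ((i.factorial : ℝ) * s^i)
      * (Beta2 (α+i) (1-ε) * w^(α+i-ε)) := by
    intro i
    have hInt2 : (∫ u, F i u ∂μ) = D i * ∫ u in (0:ℝ)..w, u^(α+(i:ℝ)-1) * (w-u)^(-ε) := by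
      rw [intervalIntegral.integral_of_le hw.le, MeasureTheory.integral_Ioc_eq_integral_Ioo,
        ← MeasureTheory.integral_const_mul]
    have hev : ∫ u in (0:ℝ)..w, u^(α+(i:ℝ)-1) * (w-u)^(-ε)
        = w ^ ((α+i)+(1-ε)-1) * Beta2 (α+i) (1-ε) := by
      have := betaIntegralW_eval (p := α+i) (q := 1-ε)
        (by positivity) (by linarith) hw
      simpa [show (1-ε)-1 = -ε by ring] using this
    rw [hInt2, hev, hD]
    rw [show (α+(i:ℝ))+(1-ε)-1 = α+(i:ℝ)-ε by ring]
    ring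
  have hIeq : (∫ u, u^(α-1) * (s-u)^(γ-1) * (w-u)^(-ε) ∂μ)
      = ∫ u in (0:ℝ)..w, u^(α-1) * (s-u)^(γ-1) * (w-u)^(-ε) := by
    rw [hμ, intervalIntegral.integral_of_le hw.le, MeasureTheory.integral_Ioc_eq_integral_Ioo]
  rw [hIeq] at H
  exact (funext hIval : (fun i => ∫ u, F i u ∂μ) = _) ▸ H

lemma beta_prod (a b e : ℝ) (ha : 0 < a) (hb : 0 < b) (he : e < 1) (i j : ℕ) :
    Beta2 (a+i) (1-e) * Beta2 (b+j) (1-(e-a-(i:ℝ))) =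
      Beta3 a b (1-e) * (poch a i * poch b j / poch (a+b+1-e) (i+j)) := by
  have hae : (0:ℝ) < a + 1 - e := by linarith
  have habe : (0:ℝ) < a + b + 1 - e := by linarith
  have hA : Real.Gamma (a+(i:ℝ)) = poch a i * Real.Gamma a := Gamma_add_nat ha i
  have hB : Real.Gamma (b+(j:ℝ)) = poch b j * Real.Gamma b := Gamma_add_nat hb j
  have hN : Real.Gamma (1-(e-a-(i:ℝ))) = poch (a+1-e) i * Real.Gamma (a+1-e) := by
    rw [show 1-(e-a-(i:ℝ)) = (a+1-e)+(i:ℕ) by push_cast; ring]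
    exact Gamma_add_nat hae i
  have hD1 : Real.Gamma ((a+(i:ℝ)) + (1-e)) = poch (a+1-e) i * Real.Gamma (a+1-e) := by
    rw [show (a+(i:ℝ))+(1-e) = (a+1-e)+(i:ℕ) by push_cast; ring]
    exact Gamma_add_nat hae i
  have hD2 : Real.Gamma ((b+(j:ℝ)) + (1-(e-a-(i:ℝ))))
      = poch (a+b+1-e) (i+j) * Real.Gamma (a+b+1-e) := by
    rw [show (b+(j:ℝ))+(1-(e-a-(i:ℝ))) = (a+b+1-e)+((i+j:ℕ):ℝ) by push_cast; ring]
    exact Gamma_add_nat habe (i+j)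
  have hD3 : Real.Gamma (a+b+(1-e)) = Real.Gamma (a+b+1-e) := by
    congr 1; ring
  simp only [Beta2, Beta3]
  rw [hA, hB, hN, hD1, hD2, hD3]
  have n1 : Real.Gamma (a+1-e) ≠ 0 := (Real.Gamma_pos_of_pos hae).ne'
  have n2 : poch (a+1-e) i ≠ 0 := (poch_pos hae i).ne'
  have n3 : Real.Gamma (a+b+1-e) ≠ 0 := (Real.Gamma_pos_of_pos habe).ne'
  have n4 : poch (a+b+1-e) (i+j) ≠ 0 := (poch_pos habe (i+j)).ne'
  field_simp

end Stmt10Aux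

open Stmt10Aux MeasureTheory Set Filter Topology in
set_option maxHeartbeats 1000000 in
/-- The integral `I₂(s,t)` evaluates to
`B(a,b,1-e) s^{c-1} t^{d-1} F₃(a, b; 1-c, 1-d; a+b+1-e; 1/s, 1/t)`. -/
theorem stmt10 (a b c d e : ℝ) (ha : 0 < a) (hb : 0 < b) (he : e < 1)
    (s t : ℝ) (hs : 1 < s) (ht : 1 < t) :
    (∫ v in (0:ℝ)..1,
        (∫ u in (0:ℝ)..(1 - v), u ^ (a - 1) * (s - u) ^ (c - 1) * (1 - u - v) ^ (-e)) *
          v ^ (b - 1) * (t - v) ^ (d - 1))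
      = Beta3 a b (1 - e) * s ^ (c - 1) * t ^ (d - 1) *
          F3 a b (1 - c) (1 - d) (a + b + 1 - e) (1 / s) (1 / t) := by
  have hs0 : (0:ℝ) < s := by linarith
  have ht0 : (0:ℝ) < t := by linarith
  set C : ℕ → ℝ := fun i => s^(c-1) * poch (1-c) i / ((i.factorial:ℝ) * s^i)
    * (Beta2 (a+i) (1-e)) with hC
  set E : ℕ → ℕ → ℝ := fun i j => t^(d-1) * poch (1-d) j / ((j.factorial:ℝ) * t^j)
    * (Beta2 (b+j) (1-(e-a-(i:ℝ))) * (1:ℝ)^(b+(j:ℝ)-(e-a-(i:ℝ)))) with hE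
  set μ : Measure ℝ := volume.restrict (Ioo (0:ℝ) 1) with hμ
  set f : ℝ → ℝ := fun v => (∫ u in (0:ℝ)..(1-v),
      u^(a-1) * (s-u)^(c-1) * ((1-v)-u)^(-e)) * v^(b-1) * (t-v)^(d-1) with hf
  set G : ℕ → ℝ → ℝ := fun i v =>
    C i * ((1-v)^(a+(i:ℝ)-e) * (v^(b-1) * (t-v)^(d-1))) with hG
  set bound : ℕ → ℝ → ℝ := fun i v =>
    |C i| * ((1-v)^(a-e) * (v^(b-1) * (t-v)^(d-1))) with hbd
  have hDabs : Summable (fun i : ℕ => |s^(c-1) * poch (1-c) i / ((i.factorial:ℝ) * s^i)|) := by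
    have hsγ : 0 < s^(c-1) := Real.rpow_pos_of_pos hs0 _
    have h0 : (0:ℝ) ≤ 1/s := by positivity
    have h1 : (1:ℝ)/s < 1 := by rw [div_lt_one hs0]; exact hs
    refine ((summable_poch (1-c) (1/s) h0 h1).mul_left (s^(c-1))).congr fun i => ?_
    have hfact : (0:ℝ) < (i.factorial : ℝ) := Nat.cast_pos.2 i.factorial_pos
    have hspow : (0:ℝ) < s^i := by positivity
    rw [abs_div, abs_mul, abs_mul, abs_of_pos hsγ, abs_of_pos hfact, abs_of_pos hspow]
    rw [div_pow, one_pow]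
    field_simp
  have hCabs : Summable (fun i => |C i|) := by
    refine Summable.of_nonneg_of_le (fun i => abs_nonneg _) (fun i => ?_)
      (hDabs.mul_right (Beta2 a (1-e)))
    simp only [hC]
    have hB2 : 0 < Beta2 (a+i) (1-e) := Beta2_pos (by positivity) (by linarith)
    rw [abs_mul, abs_of_pos hB2]
    refine mul_le_mul_of_nonneg_left ?_ (abs_nonneg _)
    refine Beta2_le ha ?_ (by linarith)
    have : (0:ℝ) ≤ (i:ℝ) := Nat.cast_nonneg i
    linarith
  have hmeas : ∀ i : ℕ, AEStronglyMeasurable (G i) μ := by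
    intro i
    rw [hμ]
    simp only [hG]
    apply ContinuousOn.aestronglyMeasurable ?_ measurableSet_Ioo
    apply ContinuousOn.mul continuousOn_const
    apply ContinuousOn.mul
    · exact ContinuousOn.rpow_const (continuous_const.sub continuous_id).continuousOn
        (fun v hv => Or.inl (sub_ne_zero.2 (ne_of_gt hv.2)))
    · apply ContinuousOn.mul
      · exact ContinuousOn.rpow_const continuousOn_id (fun v hv => Or.inl (ne_of_gt hv.1))
      · exact ContinuousOn.rpow_const (continuous_const.sub continuous_id).continuousOn
          (fun v hv => Or.inl (sub_ne_zero.2 (ne_of_gt (show v < t by linarith [hv.2]))))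
  have h_bound : ∀ i : ℕ, ∀ᵐ v ∂μ, ‖G i v‖ ≤ bound i v := by
    intro i
    rw [hμ, ae_restrict_iff' measurableSet_Ioo]
    filter_upwards with v hv
    have hv0 : 0 < v := hv.1
    have hv1 : v < 1 := hv.2
    have h1v : 0 < 1 - v := by linarith
    have htv : 0 < t - v := by linarith
    have hnn : 0 ≤ (1-v)^(a+(i:ℝ)-e) * (v^(b-1) * (t-v)^(d-1)) := by positivity
    simp only [hG, hbd]
    rw [Real.norm_eq_abs, abs_mul, abs_of_nonneg hnn]
    refine mul_le_mul_of_nonneg_left ?_ (abs_nonneg _)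
    refine mul_le_mul_of_nonneg_right ?_ (by positivity)
    refine Real.rpow_le_rpow_of_exponent_ge h1v (by linarith) ?_
    have : (0:ℝ) ≤ (i:ℝ) := Nat.cast_nonneg i
    linarith
  have h_bd_sum : ∀ᵐ v ∂μ, Summable fun i => bound i v :=
    Eventually.of_forall fun v => hCabs.mul_right _
  have h_bd_int : Integrable (fun v => ∑' i, bound i v) μ := by
    have hpt : ∀ v, (∑' i, bound i v)
        = (∑' i, |C i|) * ((1-v)^(a-e) * (v^(b-1) * (t-v)^(d-1))) := by
      intro v; simp only [hbd]; exact tsum_mul_right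
    rw [funext hpt]
    have hInt : IntervalIntegrable
        (fun v : ℝ => v^(b-1) * (1-v)^((1+a-e)-1) * (t-v)^(d-1)) volume 0 1 := by
      apply IntervalIntegrable.mul_continuousOn (betaIntegrableW hb (by linarith) one_pos)
      apply ContinuousOn.rpow_const (continuous_const.sub continuous_id).continuousOn
      intro v hv
      rw [uIcc_of_le zero_le_one] at hv
      exact Or.inl (sub_ne_zero.2 (ne_of_gt (show v < t by linarith [hv.2])))
    have hIntOn : IntegrableOn
        (fun v : ℝ => v^(b-1) * (1-v)^((1+a-e)-1) * (t-v)^(d-1)) (Ioo 0 1) volume :=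
      ((intervalIntegrable_iff_integrableOn_Ioc_of_le zero_le_one).1 hInt).mono_set
        Ioo_subset_Ioc_self
    rw [hμ]
    refine (hIntOn.const_mul (∑' i, |C i|)).congr ?_
    apply Eventually.of_forall
    intro v
    rw [show ((1:ℝ)+a-e)-1 = a-e by ring]
    ring
  have h_lim : ∀ᵐ v ∂μ, HasSum (fun i => G i v) (f v) := by
    rw [hμ, ae_restrict_iff' measurableSet_Ioo]
    filter_upwards with v hv
    have h1v0 : 0 < 1 - v := by linarith [hv.2]
    have h1v1 : 1 - v ≤ 1 := by linarith [hv.1]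
    have hk := (key (γ := c) ha he hs h1v0 h1v1).mul_right (v^(b-1) * (t-v)^(d-1))
    have hterm : ∀ i : ℕ, (s^(c-1) * poch (1-c) i / ((i.factorial:ℝ) * s^i)
        * (Beta2 (a+i) (1-e) * (1-v)^(a+(i:ℝ)-e))) * (v^(b-1) * (t-v)^(d-1)) = G i v := by
      intro i; simp only [hG, hC]; ring
    have htgt : (∫ u in (0:ℝ)..(1-v), u^(a-1) * (s-u)^(c-1) * ((1-v)-u)^(-e))
        * (v^(b-1) * (t-v)^(d-1)) = f v := by
      simp only [hf]; ring
    rw [funext hterm, htgt] at hk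
    exact hk
  have H := MeasureTheory.hasSum_integral_of_dominated_convergence bound hmeas h_bound
    h_bd_sum h_bd_int h_lim
  have hval : ∀ i : ℕ, (∫ v, G i v ∂μ) = C i * ∑' j, E i j := by
    intro i
    have hεi : e - a - (i:ℝ) < 1 := by
      have : (0:ℝ) ≤ (i:ℝ) := Nat.cast_nonneg i; linarith
    have hj := key (α := b) (γ := d) (ε := e - a - (i:ℝ)) hb hεi ht one_pos le_rfl
    have hIeq : (∫ v in (0:ℝ)..1, v^(b-1) * (t-v)^(d-1) * (1-v)^(-(e-a-(i:ℝ))))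
        = ∫ v in (0:ℝ)..1, (1-v)^(a+(i:ℝ)-e) * (v^(b-1) * (t-v)^(d-1)) := by
      apply intervalIntegral.integral_congr
      intro v hv
      rw [show -(e-a-(i:ℝ)) = a+(i:ℝ)-e by ring]
      ring
    have hGi : (∫ v, G i v ∂μ)
        = C i * ∫ v in (0:ℝ)..1, (1-v)^(a+(i:ℝ)-e) * (v^(b-1) * (t-v)^(d-1)) := by
      rw [intervalIntegral.integral_of_le zero_le_one,
        MeasureTheory.integral_Ioc_eq_integral_Ioo, ← MeasureTheory.integral_const_mul]
    rw [hGi, ← hIeq, ← hj.tsum_eq]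
  have hLHS : (∫ v in (0:ℝ)..1, (∫ u in (0:ℝ)..(1-v),
      u^(a-1) * (s-u)^(c-1) * (1-u-v)^(-e)) * v^(b-1) * (t-v)^(d-1)) = ∫ v, f v ∂μ := by
    rw [intervalIntegral.integral_of_le zero_le_one,
      MeasureTheory.integral_Ioc_eq_integral_Ioo]
    apply MeasureTheory.integral_congr_ae
    apply Eventually.of_forall
    intro v
    simp only [hf]
    congr 2
    apply intervalIntegral.integral_congr
    intro u hu
    dsimp only
    rw [sub_right_comm]
  rw [hLHS, ← H.tsum_eq]
  have htermwise : ∀ i j : ℕ, C i * E i j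
      = Beta3 a b (1-e) * s^(c-1) * t^(d-1)
        * (poch a i * poch b j * poch (1-c) i * poch (1-d) j
          / (poch (a+b+1-e) (i+j) * (i.factorial:ℝ) * (j.factorial:ℝ))
          * (1/s)^i * (1/t)^j) := by
    intro i j
    simp only [hC, hE, Real.one_rpow, mul_one]
    rw [show s^(c-1) * poch (1-c) i / ((i.factorial:ℝ) * s^i) * Beta2 (a+i) (1-e)
        * (t^(d-1) * poch (1-d) j / ((j.factorial:ℝ) * t^j) * Beta2 (b+j) (1-(e-a-(i:ℝ))))
        = (Beta2 (a+i) (1-e) * Beta2 (b+j) (1-(e-a-(i:ℝ))))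
          * (s^(c-1) * poch (1-c) i / ((i.factorial:ℝ) * s^i)
            * (t^(d-1) * poch (1-d) j / ((j.factorial:ℝ) * t^j))) by ring]
    rw [beta_prod a b e ha hb he i j]
    have habe : (0:ℝ) < a + b + 1 - e := by linarith
    have n4 : poch (a+b+1-e) (i+j) ≠ 0 := (poch_pos habe (i+j)).ne'
    have n5 : (s:ℝ)^i ≠ 0 := by positivity
    have n6 : (t:ℝ)^j ≠ 0 := by positivity
    have n7 : ((i.factorial:ℝ)) ≠ 0 := Nat.cast_ne_zero.2 i.factorial_ne_zero
    have n8 : ((j.factorial:ℝ)) ≠ 0 := Nat.cast_ne_zero.2 j.factorial_ne_zero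
    field_simp
    rw [one_div_pow, one_div_pow]; field_simp
  calc ∑' i, ∫ v, G i v ∂μ = ∑' i, C i * ∑' j, E i j := tsum_congr hval
    _ = ∑' (i : ℕ) (j : ℕ), C i * E i j := tsum_congr fun i => (tsum_mul_left).symm
    _ = ∑' (i : ℕ) (j : ℕ), Beta3 a b (1-e) * s^(c-1) * t^(d-1)
        * (poch a i * poch b j * poch (1-c) i * poch (1-d) j
          / (poch (a+b+1-e) (i+j) * (i.factorial:ℝ) * (j.factorial:ℝ))
          * (1/s)^i * (1/t)^j) :=
      tsum_congr fun i => tsum_congr fun j => htermwise i j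
    _ = Beta3 a b (1-e) * s^(c-1) * t^(d-1)
        * F3 a b (1-c) (1-d) (a+b+1-e) (1/s) (1/t) := by
      rw [F3]
      rw [← tsum_mul_left]
      exact tsum_congr fun i => tsum_mul_left
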